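/- Let (T(t))_{t≥0} be a C₀-semigroup on a Hilbert space K with ‖T(t)‖ ≤ M e^{−ω t} for constants M ≥ 1, ω > 0, and let N be a bounded operator on K. If M‖N‖/√(2ω) < 1, then for each i ∈ ℕ the operator W_i : K → L²((0,∞)^{i+1}, H) defined by (W_i x)(t₁,…,t_{i+1}) = C T(t₁) N T(t₂) ⋯ N T(t_{i+1}) x (with C ∈ L(K,H) bounded) is a bounded operator with ‖W_i‖ ≤ M ‖C‖ (2ω)^{−1/2} (M‖N‖(2ω)^{−1/2})^i, and in particular the series ∑_i ‖W_i‖² converges. -/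

import Mathlib

open MeasureTheory Set

lemma list_prod_apply_norm_le {K : Type*} [NormedAddCommGroup K] [NormedSpace ℝ K]
    (l : List (K →L[ℝ] K)) (x : K) : ‖l.prod x‖ ≤ (l.map norm).prod * ‖x‖ := by
  induction l with
  | nil => simp
  | cons a l ih =>
    simp only [List.prod_cons, List.map_cons]
    calc ‖(a * l.prod) x‖ = ‖a (l.prod x)‖ := rfl
      _ ≤ ‖a‖ * ‖l.prod x‖ := a.le_opNorm _
      _ ≤ ‖a‖ * ((l.map norm).prod * ‖x‖) :=
          mul_le_mul_of_nonneg_left ih (norm_nonneg a)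
      _ = ‖a‖ * (l.map norm).prod * ‖x‖ := by ring

/-- For an exponentially stable `C₀`-semigroup `T` with `‖T(t)‖ ≤ M e^{-ω t}` and a
bounded operator `N` with `M‖N‖/√(2ω) < 1`, each observability-type map
`W_i x : (t₁,…,t_{i+1}) ↦ C T(t₁) N T(t₂) ⋯ N T(t_{i+1}) x` is bounded from `K` to
`L²((0,∞)^{i+1}, H)` with `‖W_i‖ ≤ M‖C‖(2ω)^{-1/2} (M‖N‖(2ω)^{-1/2})^i`, and the
squares of these bounds are summable. -/
theorem observability_maps_bounded_and_summable
    {K H : Type*} [NormedAddCommGroup K] [InnerProductSpace ℝ K] [CompleteSpace K]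
    [NormedAddCommGroup H] [InnerProductSpace ℝ H] [CompleteSpace H]
    (T : ℝ → K →L[ℝ] K) (N : K →L[ℝ] K) (C : K →L[ℝ] H)
    (M ω : ℝ) (hM : 1 ≤ M) (hω : 0 < ω)
    (hT0 : T 0 = 1)
    (hTsemi : ∀ s t : ℝ, 0 ≤ s → 0 ≤ t → T (s + t) = (T s).comp (T t))
    (hTbound : ∀ t ≥ (0 : ℝ), ‖T t‖ ≤ M * Real.exp (-ω * t))
    (hsmall : M * ‖N‖ / Real.sqrt (2 * ω) < 1) :
    (∀ (i : ℕ) (x : K),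
      (∫ t in univ.pi (fun _ : Fin (i + 1) => Ioi (0 : ℝ)),
          ‖C ((T (t 0)) (((List.ofFn fun j : Fin i => N.comp (T (t j.succ))).prod) x))‖ ^ 2)
        ≤ (M * ‖C‖ / Real.sqrt (2 * ω) * (M * ‖N‖ / Real.sqrt (2 * ω)) ^ i) ^ 2 * ‖x‖ ^ 2) ∧
    Summable (fun i : ℕ =>
      (M * ‖C‖ / Real.sqrt (2 * ω) * (M * ‖N‖ / Real.sqrt (2 * ω)) ^ i) ^ 2) := by
  have h2ω : (0:ℝ) < 2 * ω := by linarith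
  have hs2pos : 0 < Real.sqrt (2 * ω) := Real.sqrt_pos.mpr h2ω
  have hs2sq : Real.sqrt (2 * ω) ^ 2 = 2 * ω := Real.sq_sqrt h2ω.le
  have hexp : ∀ s : ℝ, Real.exp (-ω * s) ^ 2 = Real.exp (-(2*ω) * s) := by
    intro s; rw [sq, ← Real.exp_add]; ring_nf
  constructor
  · intro i x
    set c : Fin (i+1) → ℝ := Fin.cases ((M * ‖C‖ * ‖x‖)^2) (fun _ => (M * ‖N‖)^2) with hc
    set f : Fin (i+1) → ℝ → ℝ :=
      fun k => (Ioi (0:ℝ)).indicator (fun s => c k * Real.exp (-(2*ω) * s)) with hf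
    have hfint : ∀ k, Integrable (f k) := by
      intro k
      rw [hf, integrable_indicator_iff measurableSet_Ioi]
      exact (exp_neg_integrableOn_Ioi 0 h2ω).const_mul _
    have hmeas : MeasurableSet (univ.pi fun _ : Fin (i+1) => Ioi (0:ℝ)) :=
      MeasurableSet.univ_pi fun _ => measurableSet_Ioi
    have hgint : Integrable (fun t : Fin (i+1) → ℝ => ∏ k, f k (t k)) :=
      Integrable.fintype_prod hfint
    have hfnonneg : ∀ k s, 0 ≤ f k s := by
      intro k s
      apply Set.indicator_nonneg
      intro y _
      have : 0 ≤ c k := by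
        rw [hc]
        induction k using Fin.cases <;> simp <;> positivity
      positivity
    have step1 :
        (∫ t in univ.pi (fun _ : Fin (i + 1) => Ioi (0 : ℝ)),
          ‖C ((T (t 0)) (((List.ofFn fun j : Fin i => N.comp (T (t j.succ))).prod) x))‖ ^ 2)
        ≤ ∫ t in univ.pi (fun _ : Fin (i + 1) => Ioi (0 : ℝ)), ∏ k, f k (t k) := by
      refine integral_mono_of_nonneg (Filter.Eventually.of_forall fun t => by positivity)
        hgint.restrict ?_
      filter_upwards [ae_restrict_mem hmeas] with t ht
      have hk : ∀ k, t k ∈ Ioi (0:ℝ) := fun k => ht k (mem_univ k)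
      have hfeq : ∀ k, f k (t k) = c k * Real.exp (-(2*ω) * t k) := fun k =>
        Set.indicator_of_mem (hk k) _
      have hT0' : ‖T (t 0)‖ ≤ M * Real.exp (-ω * t 0) := hTbound _ (hk 0).le
      set L := (List.ofFn fun j : Fin i => N.comp (T (t j.succ))).prod with hL
      set P := ∏ j : Fin i, (‖N‖ * (M * Real.exp (-ω * t j.succ))) with hP
      have hPnn : 0 ≤ P := by
        rw [hP]; exact Finset.prod_nonneg fun j _ => by positivity
      have hLx : ‖L x‖ ≤ P * ‖x‖ := by
        refine le_trans (list_prod_apply_norm_le _ _) ?_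
        apply mul_le_mul_of_nonneg_right _ (norm_nonneg x)
        rw [List.map_ofFn, List.prod_ofFn, hP]
        refine Finset.prod_le_prod (fun _ _ => norm_nonneg _) (fun j _ => ?_)
        refine le_trans (N.opNorm_comp_le _) ?_
        exact mul_le_mul_of_nonneg_left (hTbound _ (hk j.succ).le) (norm_nonneg N)
      have hbig : ‖C ((T (t 0)) (L x))‖
          ≤ ‖C‖ * ((M * Real.exp (-ω * t 0)) * (P * ‖x‖)) := by
        calc ‖C ((T (t 0)) (L x))‖ ≤ ‖C‖ * ‖(T (t 0)) (L x)‖ := C.le_opNorm _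
          _ ≤ ‖C‖ * (‖T (t 0)‖ * ‖L x‖) :=
              mul_le_mul_of_nonneg_left ((T (t 0)).le_opNorm _) (norm_nonneg C)
          _ ≤ ‖C‖ * ((M * Real.exp (-ω * t 0)) * (P * ‖x‖)) := by
              apply mul_le_mul_of_nonneg_left _ (norm_nonneg C)
              exact mul_le_mul hT0' hLx (norm_nonneg _) (by positivity)
      calc ‖C ((T (t 0)) (L x))‖ ^ 2
          ≤ (‖C‖ * ((M * Real.exp (-ω * t 0)) * (P * ‖x‖))) ^ 2 :=
            pow_le_pow_left₀ (norm_nonneg _) hbig 2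
        _ = ∏ k, f k (t k) := by
            rw [Finset.prod_congr rfl (fun k _ => hfeq k), Fin.prod_univ_succ]
            have hc0 : c 0 = (M * ‖C‖ * ‖x‖)^2 := by simp [hc]
            have hcs : ∀ j : Fin i, c j.succ = (M * ‖N‖)^2 := fun j => by simp [hc]
            rw [hc0, Finset.prod_congr rfl (fun j (_ : j ∈ Finset.univ) => by rw [hcs j])]
            have hPsq : P ^ 2 = ∏ j : Fin i, ((M * ‖N‖)^2 * Real.exp (-(2*ω) * t j.succ)) := by
              rw [hP, ← Finset.prod_pow]
              exact Finset.prod_congr rfl fun j _ => by rw [← hexp]; ring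
            rw [← hPsq, ← hexp]
            ring
    have step2 :
        (∫ t in univ.pi (fun _ : Fin (i + 1) => Ioi (0 : ℝ)), ∏ k, f k (t k))
          ≤ ∫ t : Fin (i+1) → ℝ, ∏ k, f k (t k) :=
      setIntegral_le_integral hgint
        (Filter.Eventually.of_forall fun t => Finset.prod_nonneg fun k _ => hfnonneg k _)
    have hexpint : (∫ s in Ioi (0:ℝ), Real.exp (-(2*ω) * s)) = (2*ω)⁻¹ := by
      have h := integral_comp_mul_left_Ioi (fun u => Real.exp (-u)) 0 h2ω
      simp only [mul_zero, smul_eq_mul] at h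
      rw [integral_exp_neg_Ioi_zero, mul_one] at h
      rw [← h]
      congr 1
      ext s
      ring_nf
    have step3 : (∫ t : Fin (i+1) → ℝ, ∏ k, f k (t k)) = ∏ k, c k * (2*ω)⁻¹ := by
      rw [volume_pi, integral_fintype_prod_eq_prod]
      refine Finset.prod_congr rfl fun k _ => ?_
      rw [hf, integral_indicator measurableSet_Ioi, integral_const_mul, hexpint]
    have final : (∏ k : Fin (i+1), c k * (2*ω)⁻¹)
        = (M * ‖C‖ / Real.sqrt (2 * ω) * (M * ‖N‖ / Real.sqrt (2 * ω)) ^ i) ^ 2 * ‖x‖ ^ 2 := by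
      rw [Fin.prod_univ_succ]
      have hc0 : c 0 = (M * ‖C‖ * ‖x‖)^2 := by simp [hc]
      have hcs : ∀ j : Fin i, c j.succ = (M * ‖N‖)^2 := fun j => by simp [hc]
      rw [hc0, Finset.prod_congr rfl (fun j (_ : j ∈ Finset.univ) => by rw [hcs j]),
        Finset.prod_const, Finset.card_univ, Fintype.card_fin]
      have hinv : (2*ω)⁻¹ = ((Real.sqrt (2*ω))⁻¹)^2 := by
        rw [inv_pow, hs2sq]
      rw [hinv]
      simp only [div_eq_mul_inv]
      ring
    calc (∫ t in univ.pi (fun _ : Fin (i + 1) => Ioi (0 : ℝ)),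
          ‖C ((T (t 0)) (((List.ofFn fun j : Fin i => N.comp (T (t j.succ))).prod) x))‖ ^ 2)
        ≤ ∫ t : Fin (i+1) → ℝ, ∏ k, f k (t k) := le_trans step1 step2
      _ = (M * ‖C‖ / Real.sqrt (2 * ω) * (M * ‖N‖ / Real.sqrt (2 * ω)) ^ i) ^ 2 * ‖x‖ ^ 2 := by
          rw [step3, final]
  · have hr : (0:ℝ) ≤ M * ‖N‖ / Real.sqrt (2 * ω) := by positivity
    have heq : (fun i : ℕ =>
        (M * ‖C‖ / Real.sqrt (2 * ω) * (M * ‖N‖ / Real.sqrt (2 * ω)) ^ i) ^ 2)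
        = fun i : ℕ => (M * ‖C‖ / Real.sqrt (2 * ω)) ^ 2
            * ((M * ‖N‖ / Real.sqrt (2 * ω)) ^ 2) ^ i := by
      funext i
      rw [mul_pow, ← pow_mul, ← pow_mul, Nat.mul_comm]
    rw [heq]
    exact (summable_geometric_of_lt_one (by positivity)
      (by nlinarith)).mul_left _
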